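/- Let α > 0 and suppose p ∈ (0,1) satisfies αp + log(1-p) = 0 (such p exists uniquely in (0,1) when α > 1). Then the Borel(α) distribution, defined by P(X = n) = e^{-αn}(αn)^{n-1}/n! for n ≥ 1, satisfies ∑_{n≥1} e^{-αn}(αn)^{n-1}/n! = 1 - p. -/

import Mathlib

open Real

open Finset Polynomial

lemma altsum (m : ℕ) : ∀ P : Polynomial ℝ, P.natDegree < m →
    ∑ k ∈ Finset.range (m+1), (-1)^k * (m.choose k : ℝ) * P.eval (k:ℝ) = 0 := by
  induction m with
  | zero => intro P h; omega
  | succ m ih =>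
    intro P hP
    by_cases h0 : P.natDegree = 0
    · obtain ⟨c, rfl⟩ := Polynomial.natDegree_eq_zero.mp h0
      have h1 := Int.alternating_sum_range_choose_of_ne (n := m+1) (by omega)
      have h2 : ((∑ i ∈ range (m + 1 + 1), (-1) ^ i * ((m+1).choose i : ℤ) : ℤ) : ℝ) = 0 := by
        rw [h1]; norm_num
      push_cast at h2
      simp only [Polynomial.eval_C]
      rw [← Finset.sum_mul, h2, zero_mul]
    · set Q := P.comp (X + C 1) - P with hQ
      have hP0 : P ≠ 0 := fun h => h0 (by simp [h])
      have hcomp_lc : (P.comp (X + C 1)).leadingCoeff = P.leadingCoeff := by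
        rw [Polynomial.leadingCoeff_comp (by rw [Polynomial.natDegree_X_add_C]; exact one_ne_zero)]
        rw [(Polynomial.monic_X_add_C (1:ℝ)).leadingCoeff, one_pow, mul_one]
      have hc0 : P.comp (X + C 1) ≠ 0 := by
        intro h
        apply hP0
        have h2 := hcomp_lc
        rw [h] at h2
        simpa using Polynomial.leadingCoeff_eq_zero.mp h2.symm
      have hcomp_deg : (P.comp (X + C 1)).degree = P.degree := by
        have h1 : (P.comp (X + C 1)).natDegree = P.natDegree := by
          rw [Polynomial.natDegree_comp, Polynomial.natDegree_X_add_C, mul_one]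
        rw [Polynomial.degree_eq_natDegree hP0, Polynomial.degree_eq_natDegree hc0, h1]
      have hQdeg : Q.natDegree < m := by
        by_cases hQ0 : Q = 0
        · rw [hQ0]; simpa using Nat.pos_of_ne_zero h0 |>.trans_le (Nat.lt_succ_iff.mp hP)
        · have hd : Q.degree < P.degree := by
            have := Polynomial.degree_sub_lt hcomp_deg hc0 hcomp_lc
            rwa [hcomp_deg] at this
          have := Polynomial.natDegree_lt_natDegree hQ0 hd
          omega
      have hQsum := ih Q hQdeg
      have hQeval : ∀ x : ℝ, Q.eval x = P.eval (x+1) - P.eval x := by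
        intro x; simp [hQ, Polynomial.eval_comp]
      have expand : ∀ k : ℕ, ((m + 1).choose (k + 1) : ℝ) = (m.choose k : ℝ) + (m.choose (k+1) : ℝ) := by
        intro k; rw [Nat.choose_succ_succ]; push_cast; ring
      have topzero : (m.choose (m + 1) : ℝ) = 0 := by
        simp [Nat.choose_eq_zero_of_lt]
      -- abbreviations
      have hT : ∑ k ∈ range (m+1), (-1:ℝ)^(k+1) * (m.choose (k+1) : ℝ) * P.eval ((k:ℝ)+1)
          = (∑ k ∈ range (m+1), (-1)^k * (m.choose k : ℝ) * P.eval (k:ℝ)) - P.eval 0 := by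
        rw [Finset.sum_range_succ, Finset.sum_range_succ' (fun k => (-1:ℝ)^k * (m.choose k : ℝ) * P.eval (k:ℝ))]
        rw [topzero]
        push_cast [Nat.choose_zero_right]
        ring
      have hB : ∑ k ∈ range (m+1), (-1:ℝ)^k * (m.choose k : ℝ) * Q.eval (k:ℝ)
          = (∑ k ∈ range (m+1), (-1:ℝ)^k * (m.choose k : ℝ) * P.eval ((k:ℝ)+1))
            - ∑ k ∈ range (m+1), (-1:ℝ)^k * (m.choose k : ℝ) * P.eval (k:ℝ) := by
        rw [← Finset.sum_sub_distrib]
        exact Finset.sum_congr rfl fun k _ => by rw [hQeval]; ring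
      have hsplit : ∀ k : ℕ, (-1:ℝ)^(k+1) * ((m+1).choose (k+1) : ℝ) * P.eval ((k:ℝ)+1)
          = (-((-1:ℝ)^k * (m.choose k:ℝ) * P.eval ((k:ℝ)+1)))
            + ((-1:ℝ)^(k+1) * (m.choose (k+1):ℝ) * P.eval ((k:ℝ)+1)) := by
        intro k; rw [expand]; ring
      have hS : ∑ k ∈ Finset.range (m+1+1), (-1:ℝ)^k * ((m+1).choose k : ℝ) * P.eval (k:ℝ)
          = P.eval 0
            + ((- ∑ k ∈ range (m+1), (-1:ℝ)^k * (m.choose k : ℝ) * P.eval ((k:ℝ)+1))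
            + ∑ k ∈ range (m+1), (-1:ℝ)^(k+1) * (m.choose (k+1) : ℝ) * P.eval ((k:ℝ)+1)) := by
        rw [Finset.sum_range_succ' (fun k => (-1:ℝ)^k * ((m+1).choose k : ℝ) * P.eval (k:ℝ))]
        rw [Finset.sum_congr rfl (fun k _ => by push_cast; rw [hsplit k])]
        rw [Finset.sum_add_distrib, Finset.sum_neg_distrib]
        simp only [Nat.choose_zero_right, Nat.cast_one, Nat.cast_zero, pow_zero, one_mul]
        ring
      rw [hS, hT]
      have := hQsum
      rw [hB] at this
      linarith [this]

lemma abel_pow (n : ℕ) : ∀ y : ℝ, ∑ k ∈ Finset.Icc 1 n,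
    (n.choose k : ℝ) * (k:ℝ)^(k-1) * (y + ((n:ℝ) - (k:ℝ)))^(n-k) = (n:ℝ) * (y + n)^(n-1) := by
  induction n with
  | zero => intro y; simp
  | succ n ih =>
    rcases Nat.eq_zero_or_pos n with hn | hn
    · subst hn
      intro y
      rw [show Finset.Icc 1 1 = {1} from rfl]
      norm_num
    -- n ≥ 1
    intro y
    -- the function and its derivative
    set F : ℝ → ℝ := fun y => (∑ k ∈ Finset.Icc 1 (n+1),
        ((n+1).choose k : ℝ) * (k:ℝ)^(k-1) * (y + (((n+1):ℕ):ℝ) - (k:ℝ))^((n+1)-k))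
        - ((n+1):ℝ) * (y + ((n+1):ℕ))^n with hF
    have hder : ∀ z : ℝ, HasDerivAt F 0 z := by
      intro z
      have h1 : HasDerivAt (fun y : ℝ => ∑ k ∈ Finset.Icc 1 (n+1),
          ((n+1).choose k : ℝ) * (k:ℝ)^(k-1) * (y + (((n+1):ℕ):ℝ) - (k:ℝ))^((n+1)-k))
          (∑ k ∈ Finset.Icc 1 (n+1),
          ((n+1).choose k : ℝ) * (k:ℝ)^(k-1) * ((((n+1)-k : ℕ):ℝ) * (z + (((n+1):ℕ):ℝ) - (k:ℝ))^((n+1)-k-1))) z := by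
        apply HasDerivAt.fun_sum
        intro k _
        have hb : HasDerivAt (fun y : ℝ => y + (((n+1):ℕ):ℝ) - (k:ℝ)) 1 z := by
          simpa using ((hasDerivAt_id z).add_const ((((n+1):ℕ):ℝ))).sub_const (k:ℝ)
        have := (hb.pow ((n+1)-k)).const_mul (((n+1).choose k : ℝ) * (k:ℝ)^(k-1))
        simpa [mul_assoc, mul_comm, mul_left_comm] using this
      have h2 : HasDerivAt (fun y : ℝ => ((n+1):ℝ) * (y + ((n+1):ℕ))^n)
          (((n+1):ℝ) * ((n:ℝ) * (z + ((n+1):ℕ))^(n-1))) z := by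
        have hb : HasDerivAt (fun y : ℝ => y + (((n+1):ℕ):ℝ)) 1 z := by
          simpa using (hasDerivAt_id z).add_const ((((n+1):ℕ):ℝ))
        have := (hb.pow n).const_mul (((n+1):ℝ))
        simpa [mul_assoc, mul_comm, mul_left_comm] using this
      -- identify the derivative of the sum
      have h3 : (∑ k ∈ Finset.Icc 1 (n+1),
          ((n+1).choose k : ℝ) * (k:ℝ)^(k-1) * ((((n+1)-k : ℕ):ℝ) * (z + (((n+1):ℕ):ℝ) - (k:ℝ))^((n+1)-k-1)))
          = ((n+1):ℝ) * ((n:ℝ) * (z + ((n+1):ℕ))^(n-1)) := by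
        rw [Finset.sum_Icc_succ_top (by omega : 1 ≤ n+1)]
        have htop : ((((n+1)-(n+1) : ℕ):ℝ) = 0) := by simp
        rw [htop]
        simp only [zero_mul, mul_zero, add_zero]
        have hstep : ∀ k ∈ Finset.Icc 1 n,
            ((n+1).choose k : ℝ) * (k:ℝ)^(k-1) * ((((n+1)-k : ℕ):ℝ) * (z + (((n+1):ℕ):ℝ) - (k:ℝ))^((n+1)-k-1))
            = ((n+1):ℝ) * ((n.choose k : ℝ) * (k:ℝ)^(k-1) * ((z+1) + ((n:ℝ) - (k:ℝ)))^(n-k)) := by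
          intro k hk
          rw [Finset.mem_Icc] at hk
          have hcast : (((n+1)-k : ℕ):ℝ) * ((n+1).choose k : ℝ) = ((n+1):ℝ) * (n.choose k : ℝ) := by
            have := Nat.choose_mul_succ_eq n k
            have : ((n.choose k * (n + 1) : ℕ) : ℝ) = (((n+1).choose k * (n + 1 - k) : ℕ) : ℝ) := by
              exact_mod_cast congrArg (Nat.cast (R := ℝ)) this
            push_cast at this
            linarith [this]
          have hexp : (n+1)-k-1 = n-k := by omega
          have hbase : z + (((n+1):ℕ):ℝ) - (k:ℝ) = (z+1) + ((n:ℝ) - (k:ℝ)) := by push_cast; ring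
          rw [hexp, hbase]
          linear_combination ((k:ℝ)^(k-1) * ((z+1) + ((n:ℝ) - (k:ℝ)))^(n-k)) * hcast
        rw [Finset.sum_congr rfl hstep, ← Finset.mul_sum, ih (z+1)]
        have : (z+1) + (n:ℝ) = z + (((n+1):ℕ):ℝ) := by push_cast; ring
        rw [this]
      have := h1.sub h2
      rw [h3, sub_self] at this
      exact this
    have hconst : ∀ a b : ℝ, F a = F b :=
      is_const_of_deriv_eq_zero (fun z => (hder z).differentiableAt) (fun z => (hder z).deriv) 
    have hval : F (-(((n+1):ℕ):ℝ)) = 0 := by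
      have hPdeg : (Polynomial.X^n : Polynomial ℝ).natDegree < n+1 := by
        simp [Polynomial.natDegree_X_pow]
      have h0 := altsum (n+1) (Polynomial.X^n) hPdeg
      simp only [Polynomial.eval_pow, Polynomial.eval_X] at h0
      have hins : Finset.range (n+1+1) = insert 0 (Finset.Icc 1 (n+1)) := by
        ext x; simp; omega
      rw [hins, Finset.sum_insert (by simp)] at h0
      have hz : ((-1:ℝ))^0 * (((n+1).choose 0 : ℕ):ℝ) * ((0:ℕ):ℝ)^n = 0 := by
        simp [zero_pow hn.ne']
      rw [hz, zero_add] at h0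
      have hterm : ∀ k ∈ Finset.Icc 1 (n+1),
          (((n+1).choose k : ℕ):ℝ) * (k:ℝ)^(k-1) * ((-(((n+1):ℕ):ℝ)) + (((n+1):ℕ):ℝ) - (k:ℝ))^((n+1)-k)
          = (-1:ℝ)^(n+1) * ((-1:ℝ)^k * (((n+1).choose k : ℕ):ℝ) * (k:ℝ)^n) := by
        intro k hk
        rw [Finset.mem_Icc] at hk
        have hbase : (-(((n+1):ℕ):ℝ)) + (((n+1):ℕ):ℝ) - (k:ℝ) = -(k:ℝ) := by ring
        rw [hbase, neg_pow]
        have hsign : ((-1:ℝ))^((n+1)-k) = (-1:ℝ)^(n+1) * (-1:ℝ)^k := by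
          have hkk : ((-1:ℝ))^k * (-1:ℝ)^k = 1 := by
            rw [← pow_add]; exact Even.neg_one_pow ⟨k, rfl⟩
          calc ((-1:ℝ))^((n+1)-k) = ((-1:ℝ))^((n+1)-k) * (((-1:ℝ))^k * (-1:ℝ)^k) := by
                rw [hkk, mul_one]
            _ = ((-1:ℝ))^(((n+1)-k)+k) * (-1:ℝ)^k := by rw [pow_add]; ring
            _ = (-1:ℝ)^(n+1) * (-1:ℝ)^k := by rw [show (n+1)-k+k = n+1 from by omega]
        rw [hsign]
        have hpow : (k:ℝ)^(k-1) * (k:ℝ)^((n+1)-k) = (k:ℝ)^n := by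
          rw [← pow_add, show k-1 + ((n+1)-k) = n from by omega]
        calc (((n+1).choose k : ℕ):ℝ) * (k:ℝ)^(k-1) * ((-1:ℝ)^(n+1) * (-1:ℝ)^k * (k:ℝ)^((n+1)-k))
            = ((-1:ℝ)^(n+1) * ((-1:ℝ)^k * (((n+1).choose k : ℕ):ℝ))) * ((k:ℝ)^(k-1) * (k:ℝ)^((n+1)-k)) := by
              ring
          _ = (-1:ℝ)^(n+1) * ((-1:ℝ)^k * (((n+1).choose k : ℕ):ℝ) * (k:ℝ)^n) := by
              rw [hpow]; ring
      rw [hF]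
      simp only []
      rw [Finset.sum_congr rfl hterm, ← Finset.mul_sum, h0, mul_zero]
      have : (-(((n+1):ℕ):ℝ) + (((n+1):ℕ):ℝ)) = 0 := by ring
      rw [this, zero_pow hn.ne', mul_zero, sub_zero]
    have := hconst y (-(((n+1):ℕ):ℝ))
    rw [hval] at this
    have : F y = 0 := this
    rw [hF] at this
    have h4 := sub_eq_zero.mp this
    convert h4 using 2 <;> push_cast <;> ring_nf

noncomputable def borelA (x : ℝ) : ℕ → ℝ
  | 0 => 0
  | (n+1) => ((n+1:ℕ):ℝ)^n * x^(n+1) / ((Nat.factorial (n+1) : ℕ):ℝ)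

noncomputable def borelB (x : ℝ) : ℕ → ℝ
  | 0 => 0
  | (n+1) => ((n+1:ℕ):ℝ)^(n+1) * x^(n+1) / ((Nat.factorial (n+1) : ℕ):ℝ)

noncomputable def borelD (x : ℝ) : ℕ → ℝ
  | 0 => 0
  | (n+1) => ((n+1:ℕ):ℝ)^(n+1) * x^n / ((Nat.factorial (n+1) : ℕ):ℝ)

lemma pow_div_factorial_le (n : ℕ) : ((n:ℕ):ℝ)^n / ((Nat.factorial n : ℕ):ℝ) ≤ Real.exp 1 ^ n := by
  rw [← Real.exp_nat_mul, mul_one]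
  rw [div_le_iff₀ (by positivity)]
  calc ((n:ℕ):ℝ)^n = ((n:ℝ)^n / (Nat.factorial n : ℝ)) * (Nat.factorial n : ℝ) := by
        field_simp
    _ ≤ Real.exp (n:ℝ) * (Nat.factorial n : ℝ) := by
        gcongr
        calc (n:ℝ)^n / (Nat.factorial n : ℝ)
            ≤ ∑ i ∈ Finset.range (n+1), (n:ℝ)^i / (Nat.factorial i : ℝ) := by
              refine Finset.single_le_sum (f := fun i => (n:ℝ)^i / (Nat.factorial i : ℝ))
                (fun i _ => by positivity) (by simp)
          _ ≤ Real.exp (n:ℝ) := Real.sum_le_exp_of_nonneg (by positivity) _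

lemma borelB_bound {x : ℝ} (hx : 0 ≤ x) (n : ℕ) : |borelB x n| ≤ (Real.exp 1 * x)^n := by
  match n with
  | 0 => simp [borelB]
  | (m+1) =>
    rw [borelB, abs_of_nonneg (by positivity), mul_pow]
    rw [div_eq_mul_one_div, mul_comm (((m+1:ℕ):ℝ)^(m+1)) (x^(m+1)), mul_assoc] at *
    have h2 := pow_div_factorial_le (m+1)
    calc x^(m+1) * (((m+1:ℕ):ℝ)^(m+1) * (1 / ((Nat.factorial (m+1) : ℕ):ℝ)))
        = x^(m+1) * (((m+1:ℕ):ℝ)^(m+1) / ((Nat.factorial (m+1) : ℕ):ℝ)) := by ring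
      _ ≤ x^(m+1) * Real.exp 1 ^ (m+1) := by gcongr
      _ = Real.exp 1 ^ (m+1) * x^(m+1) := by ring

lemma borelA_le_borelB {x : ℝ} (hx : 0 ≤ x) (n : ℕ) : |borelA x n| ≤ |borelB x n| := by
  match n with
  | 0 => simp [borelA, borelB]
  | (m+1) =>
    rw [borelA, borelB, abs_of_nonneg (by positivity), abs_of_nonneg (by positivity)]
    have hb : ((m+1:ℕ):ℝ)^m ≤ ((m+1:ℕ):ℝ)^(m+1) :=
      pow_le_pow_right₀ (by exact_mod_cast Nat.succ_le_succ (Nat.zero_le m)) (by omega)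
    gcongr

lemma borelA_bound {x : ℝ} (hx : 0 ≤ x) (n : ℕ) : |borelA x n| ≤ (Real.exp 1 * x)^n :=
  (borelA_le_borelB hx n).trans (borelB_bound hx n)

lemma summable_geom_aux {x : ℝ} (hx : 0 ≤ x) (hx1 : Real.exp 1 * x < 1) :
    Summable (fun n : ℕ => (Real.exp 1 * x)^n) :=
  summable_geometric_of_lt_one (by positivity) hx1

lemma borelA_summable {x : ℝ} (hx : 0 ≤ x) (hx1 : Real.exp 1 * x < 1) :
    Summable (fun n => |borelA x n|) :=
  (summable_geom_aux hx hx1).of_nonneg_of_le (fun n => abs_nonneg _) (fun n => borelA_bound hx n)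

lemma borelB_summable {x : ℝ} (hx : 0 ≤ x) (hx1 : Real.exp 1 * x < 1) :
    Summable (fun n => |borelB x n|) :=
  (summable_geom_aux hx hx1).of_nonneg_of_le (fun n => abs_nonneg _) (fun n => borelB_bound hx n)

lemma borelA_eq {x : ℝ} {k : ℕ} (hk : 1 ≤ k) :
    borelA x k = (k:ℝ)^(k-1) * x^k / ((Nat.factorial k : ℕ):ℝ) := by
  cases k with
  | zero => omega
  | succ m => rfl

lemma borelB_eq {x : ℝ} {k : ℕ} (hk : 1 ≤ k) :
    borelB x k = (k:ℝ)^k * x^k / ((Nat.factorial k : ℕ):ℝ) := by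
  cases k with
  | zero => omega
  | succ m => rfl

lemma borel_conv (x : ℝ) (n : ℕ) :
    ∑ kl ∈ Finset.HasAntidiagonal.antidiagonal n, borelA x kl.1 * borelB x kl.2 = borelB x n - borelA x n := by
  rcases n with _ | m
  · simp [borelA, borelB]
  rw [Finset.Nat.sum_antidiagonal_eq_sum_range_succ_mk]
  have hins : Finset.range (m+1+1) = insert 0 (Finset.Icc 1 (m+1)) := by ext z; simp; omega
  rw [hins, Finset.sum_insert (by simp)]
  have h00 : borelA x 0 * borelB x (m+1-0) = 0 := by simp [borelA]
  rw [h00, zero_add]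
  have hins2 : Finset.Icc 1 (m+1) = insert (m+1) (Finset.Icc 1 m) := by ext z; simp; omega
  rw [hins2, Finset.sum_insert (by simp)]
  have htop : borelA x (m+1) * borelB x (m+1-(m+1)) = 0 := by
    simp [show m+1-(m+1) = 0 from by omega, borelB]
  rw [htop, zero_add]
  have habel := abel_pow (m+1) 0
  rw [hins2, Finset.sum_insert (by simp)] at habel
  have habeltop : (((m+1).choose (m+1) : ℕ):ℝ) * (((m+1):ℕ):ℝ)^((m+1)-1)
      * ((0:ℝ) + (((((m+1)):ℕ):ℝ) - ((((m+1)):ℕ):ℝ)))^((m+1)-(m+1)) = (((m+1):ℕ):ℝ)^m := by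
    simp
  rw [habeltop] at habel
  have hterm : ∀ k ∈ Finset.Icc 1 m,
      borelA x k * borelB x ((m+1)-k)
      = (((m+1).choose k : ℕ):ℝ) * (k:ℝ)^(k-1) * ((0:ℝ) + (((((m+1)):ℕ):ℝ) - (k:ℝ)))^((m+1)-k)
        * x^(m+1) / ((Nat.factorial (m+1) : ℕ):ℝ) := by
    intro k hk
    rw [Finset.mem_Icc] at hk
    have hk1 : 1 ≤ k := hk.1
    rw [borelA_eq hk1, borelB_eq (by omega : 1 ≤ (m+1)-k)]
    have hbase : (0:ℝ) + (((((m+1)):ℕ):ℝ) - (k:ℝ)) = ((((m+1)-k) : ℕ):ℝ) := by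
      rw [Nat.cast_sub (by omega : k ≤ m+1)]; ring
    rw [hbase]
    have hfact : ((Nat.factorial (m+1) : ℕ):ℝ)
        = (((m+1).choose k : ℕ):ℝ) * ((Nat.factorial k : ℕ):ℝ) * ((Nat.factorial ((m+1)-k) : ℕ):ℝ) := by
      exact_mod_cast congrArg (Nat.cast (R := ℝ))
        (Nat.choose_mul_factorial_mul_factorial (by omega : k ≤ m+1)).symm
    have hxp : x^k * x^((m+1)-k) = x^(m+1) := by
      rw [← pow_add]; congr 1; omega
    rw [← hxp, hfact]
    have hC : (((m+1).choose k : ℕ):ℝ) ≠ 0 := by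
      exact_mod_cast (Nat.choose_pos (by omega : k ≤ m+1)).ne'
    have hFk : ((Nat.factorial k : ℕ):ℝ) ≠ 0 := by
      exact_mod_cast (Nat.factorial_pos k).ne'
    have hFnk : ((Nat.factorial ((m+1)-k) : ℕ):ℝ) ≠ 0 := by
      exact_mod_cast (Nat.factorial_pos ((m+1)-k)).ne'
    field_simp
  rw [Finset.sum_congr rfl hterm]
  have hpull : ∑ k ∈ Finset.Icc 1 m,
      (((m+1).choose k : ℕ):ℝ) * (k:ℝ)^(k-1) * ((0:ℝ) + (((((m+1)):ℕ):ℝ) - (k:ℝ)))^((m+1)-k)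
        * x^(m+1) / ((Nat.factorial (m+1) : ℕ):ℝ)
      = (∑ k ∈ Finset.Icc 1 m,
      (((m+1).choose k : ℕ):ℝ) * (k:ℝ)^(k-1) * ((0:ℝ) + (((((m+1)):ℕ):ℝ) - (k:ℝ)))^((m+1)-k))
        * x^(m+1) / ((Nat.factorial (m+1) : ℕ):ℝ) := by
    simp only [mul_div_assoc]
    rw [← Finset.sum_mul]
  rw [hpull]
  have hsum : (∑ k ∈ Finset.Icc 1 m,
      (((m+1).choose k : ℕ):ℝ) * (k:ℝ)^(k-1) * ((0:ℝ) + (((((m+1)):ℕ):ℝ) - (k:ℝ)))^((m+1)-k))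
      = (((m+1):ℕ):ℝ)^(m+1) - (((m+1):ℕ):ℝ)^m := by
    have h2 : ((((m+1)):ℕ):ℝ) * ((0:ℝ) + ((((m+1)):ℕ):ℝ))^((m+1)-1) = (((m+1):ℕ):ℝ)^(m+1) := by
      rw [zero_add, show (m+1)-1 = m from rfl, ← pow_succ']
    linarith [habel, h2]
  rw [hsum, borelA_eq (by omega : 1 ≤ m+1), borelB_eq (by omega : 1 ≤ m+1)]
  have : ((m+1:ℕ):ℝ)^((m+1)-1) = ((m+1:ℕ):ℝ)^m := by norm_num
  rw [this]
  ring

lemma borelA_hasDerivAt (n : ℕ) (x : ℝ) : HasDerivAt (fun y => borelA y n) (borelD x n) x := by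
  cases n with
  | zero => simpa [borelA, borelD] using hasDerivAt_const x (0:ℝ)
  | succ m =>
    have h := ((hasDerivAt_pow (m+1) x).const_mul (((m+1:ℕ):ℝ)^m)).div_const
      ((Nat.factorial (m+1) : ℕ):ℝ)
    have heq : ((m+1:ℕ):ℝ)^m * (((m+1:ℕ):ℝ) * x^(m+1-1)) / ((Nat.factorial (m+1) : ℕ):ℝ)
        = borelD x (m+1) := by
      show _ = ((m+1:ℕ):ℝ)^(m+1) * x^m / ((Nat.factorial (m+1) : ℕ):ℝ)
      rw [pow_succ, Nat.add_sub_cancel]; ring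
    rw [heq] at h
    exact h

lemma borelD_bound {x r : ℝ} (hx : |x| ≤ r) (n : ℕ) :
    |borelD x n| ≤ (fun n => match n with
      | 0 => (0:ℝ)
      | (m+1) => Real.exp 1 ^ (m+1) * r^m) n := by
  match n with
  | 0 => simp [borelD]
  | (m+1) =>
    have hr : 0 ≤ r := (abs_nonneg x).trans hx
    show |((m+1:ℕ):ℝ)^(m+1) * x^(m+1-1+0) / ((Nat.factorial (m+1) : ℕ):ℝ)| ≤ _
    rw [abs_div, abs_mul, abs_pow, abs_pow]
    simp only [Nat.abs_cast, Nat.add_sub_cancel, add_zero]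
    calc ((m+1:ℕ):ℝ)^(m+1) * |x|^m / ((Nat.factorial (m+1) : ℕ):ℝ)
        = (((m+1:ℕ):ℝ)^(m+1) / ((Nat.factorial (m+1) : ℕ):ℝ)) * |x|^m := by ring
      _ ≤ Real.exp 1 ^ (m+1) * r^m := by
          gcongr
          exact pow_div_factorial_le (m+1)

lemma borelA_nonneg {x : ℝ} (hx : 0 ≤ x) (n : ℕ) : 0 ≤ borelA x n := by
  match n with
  | 0 => simp [borelA]
  | (m+1) => show (0:ℝ) ≤ ((m+1:ℕ):ℝ)^m * x^(m+1) / ((Nat.factorial (m+1) : ℕ):ℝ); positivity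

lemma borelB_nonneg {x : ℝ} (hx : 0 ≤ x) (n : ℕ) : 0 ≤ borelB x n := by
  match n with
  | 0 => simp [borelB]
  | (m+1) => show (0:ℝ) ≤ ((m+1:ℕ):ℝ)^(m+1) * x^(m+1) / ((Nat.factorial (m+1) : ℕ):ℝ); positivity

lemma borelB_eq_mul {x : ℝ} (n : ℕ) : borelB x n = x * borelD x n := by
  match n with
  | 0 => simp [borelB, borelD]
  | (m+1) =>
    show ((m+1:ℕ):ℝ)^(m+1) * x^(m+1) / ((Nat.factorial (m+1) : ℕ):ℝ)
      = x * (((m+1:ℕ):ℝ)^(m+1) * x^m / ((Nat.factorial (m+1) : ℕ):ℝ))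
    rw [pow_succ]
    ring

lemma borel_g_root {x : ℝ} (hx0 : 0 < x) (hx1 : Real.exp 1 * x < 1) :
    (∑' n, borelA x n) * Real.exp (-(∑' n, borelA x n)) = x ∧ (∑' n, borelA x n) < 1 := by
  have hex : (0:ℝ) < Real.exp 1 := Real.exp_pos 1
  have hxinv : x < (Real.exp 1)⁻¹ := by
    rw [inv_eq_one_div, lt_div_iff₀ hex]
    linarith [hx1]
  set r : ℝ := (x + (Real.exp 1)⁻¹)/2 with hrdef
  have hxr : x < r := by rw [hrdef]; linarith
  have hr0 : 0 < r := by rw [hrdef]; positivity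
  have hrinv : r < (Real.exp 1)⁻¹ := by rw [hrdef]; linarith
  have her : Real.exp 1 * r < 1 := by
    rw [inv_eq_one_div] at hrinv
    rw [mul_comm, ← lt_div_iff₀ hex]
    exact hrinv
  -- the bounding sequence for derivatives
  set u : ℕ → ℝ := fun n => match n with
    | 0 => (0:ℝ)
    | (m+1) => Real.exp 1 ^ (m+1) * r^m with hudef
  have hu : Summable u := by
    rw [← summable_nat_add_iff 1]
    have : (fun m => u (m+1)) = fun m => Real.exp 1 * (Real.exp 1 * r)^m := by
      funext m
      show Real.exp 1 ^ (m+1) * r^m = _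
      rw [mul_pow, pow_succ]
      ring
    rw [this]
    exact (summable_geometric_of_lt_one (by positivity) her).mul_left _
  have hsub : ∀ y : ℝ, y ∈ Set.Ioo (-r) r → ∀ n, ‖borelD y n‖ ≤ u n := by
    intro y hy n
    rw [Real.norm_eq_abs]
    exact borelD_bound (le_of_lt (abs_lt.mpr ⟨hy.1, hy.2⟩)) n
  have hA0f : (fun n => borelA (0:ℝ) n) = fun _ => (0:ℝ) := by
    funext n
    match n with
    | 0 => rfl
    | (m+1) =>
      show ((m+1:ℕ):ℝ)^m * (0:ℝ)^(m+1) / ((Nat.factorial (m+1) : ℕ):ℝ) = 0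
      simp
  have hA0 : Summable (fun n => borelA (0:ℝ) n) := by
    rw [hA0f]; exact summable_zero
  have hg' : ∀ y ∈ Set.Ioo (-r) r,
      HasDerivAt (fun z => ∑' n, borelA z n) (∑' n, borelD y n) y := by
    intro y hy
    exact hasDerivAt_tsum_of_isPreconnected hu isOpen_Ioo (convex_Ioo _ _).isPreconnected
      (fun n z _ => borelA_hasDerivAt n z) (fun n z hz => hsub z hz n)
      (Set.mem_Ioo.mpr ⟨by linarith, hr0⟩) hA0 hy
  -- relation G (1 - g) = g on [0, r)
  have hrel : ∀ y : ℝ, 0 ≤ y → Real.exp 1 * y < 1 →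
      (∑' n, borelB y n) * (1 - ∑' n, borelA y n) = ∑' n, borelA y n := by
    intro y hy0 hy1
    have hAn : Summable (fun n => ‖borelA y n‖) := by
      simpa [Real.norm_eq_abs] using borelA_summable hy0 hy1
    have hBn : Summable (fun n => ‖borelB y n‖) := by
      simpa [Real.norm_eq_abs] using borelB_summable hy0 hy1
    have hcauchy := tsum_mul_tsum_eq_tsum_sum_antidiagonal_of_summable_norm hAn hBn
    rw [tsum_congr (borel_conv y)] at hcauchy
    rw [Summable.tsum_sub (Summable.of_norm hBn) (Summable.of_norm hAn)] at hcauchy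
    linear_combination (-1 : ℝ) * hcauchy
  have hg_nonneg : ∀ y : ℝ, 0 ≤ y → 0 ≤ ∑' n, borelA y n :=
    fun y hy => tsum_nonneg (borelA_nonneg hy)
  have hG_nonneg : ∀ y : ℝ, 0 ≤ y → 0 ≤ ∑' n, borelB y n :=
    fun y hy => tsum_nonneg (borelB_nonneg hy)
  have hg_lt_one : ∀ y : ℝ, 0 ≤ y → Real.exp 1 * y < 1 → (∑' n, borelA y n) < 1 := by
    intro y hy0 hy1
    have h1 := hrel y hy0 hy1
    have h2 := hg_nonneg y hy0
    have h3 := hG_nonneg y hy0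
    nlinarith
  -- G y = y * D y
  have hGD : ∀ y : ℝ, (∑' n, borelB y n) = y * ∑' n, borelD y n := by
    intro y
    rw [tsum_congr (fun n => borelB_eq_mul (x := y) n), tsum_mul_left]
  -- derivative of k is 0 on Ioo 0 r
  set g : ℝ → ℝ := fun z => ∑' n, borelA z n with hgdef
  set k : ℝ → ℝ := fun z => g z * Real.exp (-(g z)) / z with hkdef
  have hyIoo : ∀ y : ℝ, y ∈ Set.Ioo (0:ℝ) r → y ∈ Set.Ioo (-r) r := by
    intro y hy
    exact Set.mem_Ioo.mpr ⟨by linarith [hy.1], hy.2⟩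
  have hey : ∀ y : ℝ, y ∈ Set.Ioo (0:ℝ) r → Real.exp 1 * y < 1 := by
    intro y hy
    have := hy.2
    nlinarith [hy.1, her, hex]
  have hk' : ∀ y : ℝ, y ∈ Set.Ioo (0:ℝ) r → HasDerivAt k 0 y := by
    intro y hy
    have hgy := hg' y (hyIoo y hy)
    have hexp : HasDerivAt (fun z => Real.exp (-(g z)))
        (Real.exp (-(g y)) * (-(∑' n, borelD y n))) y := by
      exact (hgy.neg).exp
    have hh := hgy.mul hexp
    have hid : HasDerivAt (fun z : ℝ => z) 1 y := hasDerivAt_id y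
    have hk := hh.div hid (ne_of_gt hy.1)
    have hnum : ((∑' n, borelD y n) * Real.exp (-(g y))
        + g y * (Real.exp (-(g y)) * (-(∑' n, borelD y n)))) * y
        - g y * Real.exp (-(g y)) * 1 = 0 := by
      have h1 := hrel y (le_of_lt hy.1) (hey y hy)
      have h2 := hGD y
      rw [h2] at h1
      have h1' : (y * ∑' (n:ℕ), borelD y n) * (1 - g y) = g y := h1
      linear_combination Real.exp (-(g y)) * h1'
    simp only [Pi.mul_apply] at hk
    rw [show (((∑' n, borelD y n) * Real.exp (-(g y))
        + g y * (Real.exp (-(g y)) * (-(∑' n, borelD y n)))) * y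
        - g y * Real.exp (-(g y)) * 1) / y^2 = 0 from by rw [hnum]; simp] at hk
    exact hk
  -- k is constant on Ioo 0 r
  have hconst : ∀ z ∈ Set.Ioo (0:ℝ) r, k z = k x := by
    intro z hz
    have hxmem : x ∈ Set.Ioo (0:ℝ) r := ⟨hx0, hxr⟩
    set a := min z x with hadef
    set b := max z x with hbdef
    have hab : a ≤ b := min_le_max
    have haIoo : ∀ w, w ∈ Set.Icc a b → w ∈ Set.Ioo (0:ℝ) r := by
      intro w hw
      constructor
      · calc (0:ℝ) < min z x := lt_min hz.1 hxmem.1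
          _ ≤ w := hw.1
      · calc w ≤ max z x := hw.2
          _ < r := max_lt hz.2 hxmem.2
    have hcont : ContinuousOn k (Set.Icc a b) := fun w hw =>
      ((hk' w (haIoo w hw)).continuousAt).continuousWithinAt
    have hderiv : ∀ w ∈ Set.Ico a b, HasDerivWithinAt k 0 (Set.Ici w) w := by
      intro w hw
      exact (hk' w (haIoo w ⟨hw.1, le_of_lt hw.2⟩)).hasDerivWithinAt
    have hca := constant_of_has_deriv_right_zero hcont hderiv
    have hza : k z = k a := hca z ⟨min_le_left _ _, le_max_left _ _⟩
    have hxa : k x = k a := hca x ⟨min_le_right _ _, le_max_right _ _⟩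
    rw [hza, hxa]
  -- limit of k at 0+ is 1
  have hg0 : g 0 = 0 := by
    show (∑' (n:ℕ), borelA (0:ℝ) n) = 0
    calc (∑' (n:ℕ), borelA (0:ℝ) n) = ∑' (_:ℕ), (0:ℝ) :=
          tsum_congr (fun n => congrFun hA0f n)
      _ = 0 := tsum_zero
  have hD0 : (∑' n, borelD (0:ℝ) n) = 1 := by
    rw [tsum_eq_single 1]
    · show ((1:ℕ):ℝ)^1 * (0:ℝ)^0 / ((Nat.factorial 1 : ℕ):ℝ) = 1
      norm_num
    · intro b hb
      match b with
      | 0 => rfl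
      | 1 => exact absurd rfl hb
      | (m+2) =>
        show ((m+2:ℕ):ℝ)^(m+2) * (0:ℝ)^(m+1) / ((Nat.factorial (m+2) : ℕ):ℝ) = 0
        simp
  have hg'0 : HasDerivAt g 1 0 := by
    have := hg' 0 (Set.mem_Ioo.mpr ⟨by linarith, hr0⟩)
    rwa [hD0] at this
  have hslope : Filter.Tendsto (fun y => g y / y) (nhdsWithin 0 (Set.Ioi (0:ℝ))) (nhds 1) := by
    have h1 := hasDerivAt_iff_tendsto_slope.mp hg'0
    have h2 : Filter.Tendsto (slope g 0) (nhdsWithin 0 (Set.Ioi (0:ℝ))) (nhds 1) :=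
      h1.mono_left (nhdsWithin_mono 0 (fun y hy => ne_of_gt hy))
    refine h2.congr (fun y => ?_)
    rw [slope_def_field, hg0, sub_zero, sub_zero]
  have hgc : Filter.Tendsto g (nhds 0) (nhds 0) := by
    simpa [hg0] using hg'0.continuousAt.tendsto
  have hexp_lim : Filter.Tendsto (fun y => Real.exp (-(g y)))
      (nhdsWithin 0 (Set.Ioi (0:ℝ))) (nhds 1) := by
    have h1 : Filter.Tendsto (fun y => Real.exp (-(g y))) (nhds 0) (nhds (Real.exp (-(0:ℝ)))) :=
      (Real.continuous_exp.continuousAt.tendsto).comp hgc.neg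
    rw [neg_zero, Real.exp_zero] at h1
    exact h1.mono_left nhdsWithin_le_nhds
  have hk_lim : Filter.Tendsto k (nhdsWithin 0 (Set.Ioi (0:ℝ))) (nhds 1) := by
    have h1 := hslope.mul hexp_lim
    rw [one_mul] at h1
    refine h1.congr (fun y => ?_)
    show g y / y * Real.exp (-(g y)) = g y * Real.exp (-(g y)) / y
    rw [mul_div_right_comm]
  have hkx1 : k x = 1 := by
    have hconst' : Filter.Tendsto k (nhdsWithin 0 (Set.Ioi (0:ℝ))) (nhds (k x)) := by
      refine Filter.Tendsto.congr' ?_ (tendsto_const_nhds (α := ℝ) (f := nhdsWithin 0 (Set.Ioi (0:ℝ))))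
      exact Filter.eventually_of_mem (Ioo_mem_nhdsGT_of_mem ⟨le_refl (0:ℝ), hr0⟩)
        (fun z hz => (hconst z hz).symm)
    exact tendsto_nhds_unique hconst' hk_lim
  constructor
  · have h1 : g x * Real.exp (-(g x)) / x = 1 := hkx1
    rw [div_eq_one_iff_eq (ne_of_gt hx0)] at h1
    exact h1
  · exact hg_lt_one x (le_of_lt hx0) hx1

/-- If `α > 0` and `p ∈ (0,1)` satisfies `αp + log(1-p) = 0`, then the total mass of
the Borel(α) distribution on finite values is `1 - p`:
`∑_{n≥1} e^{-αn}(αn)^{n-1}/n! = 1 - p`. -/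
theorem borel_total_mass_supercritical
    (α : ℝ) (hα : 0 < α) (p : ℝ) (hp : p ∈ Set.Ioo (0 : ℝ) 1)
    (hroot : α * p + Real.log (1 - p) = 0) :
    ∑' n : ℕ, Real.exp (-(α * (n + 1))) * (α * (n + 1)) ^ n / (Nat.factorial (n + 1) : ℝ) = 1 - p := by
  obtain ⟨hp0, hp1⟩ := hp
  have hq0 : 0 < 1 - p := by linarith
  have hq1 : 1 - p ≠ 1 := by intro h; linarith
  have hlog : Real.log (1 - p) = -(α * p) := by linarith
  have hα1 : 1 < α := by
    have h1 := Real.log_lt_sub_one_of_pos hq0 hq1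
    rw [hlog] at h1
    nlinarith
  set β := α * (1 - p) with hβdef
  have hβ0 : 0 < β := mul_pos hα hq0
  have hβ1 : β < 1 := by
    have hinv1 : (1 - p)⁻¹ ≠ 1 := by
      intro h
      rw [inv_eq_one] at h
      exact hq1 h
    have h2 := Real.log_lt_sub_one_of_pos (inv_pos.mpr hq0) hinv1
    rw [Real.log_inv, hlog, neg_neg] at h2
    have h3 : (1-p)⁻¹ * (1-p) = 1 := inv_mul_cancel₀ (ne_of_gt hq0)
    nlinarith [mul_lt_mul_of_pos_right h2 hq0, hp0]
  set x0 := α * Real.exp (-α) with hx0def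
  have hx0pos : 0 < x0 := mul_pos hα (Real.exp_pos _)
  have hx0exp : x0 = Real.exp (Real.log α - α) := by
    rw [hx0def, Real.exp_sub, Real.exp_log hα, Real.exp_neg, div_eq_mul_inv]
  have hex0 : Real.exp 1 * x0 < 1 := by
    rw [hx0exp, ← Real.exp_add]
    have hlogα := Real.log_lt_sub_one_of_pos hα (ne_of_gt hα1)
    calc Real.exp (1 + (Real.log α - α)) < Real.exp 0 := Real.exp_lt_exp.mpr (by linarith)
      _ = 1 := Real.exp_zero
  have hβx : β * Real.exp (-β) = x0 := by
    have hexpβ : Real.exp (-β) = Real.exp (-α) * (1-p)⁻¹ := by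
      rw [show -β = -α + α * p by rw [hβdef]; ring, Real.exp_add]
      congr 1
      rw [show α * p = -Real.log (1-p) by linarith [hlog], Real.exp_neg, Real.exp_log hq0]
    rw [hexpβ, hx0def, hβdef]
    field_simp
  obtain ⟨hroot2, hglt⟩ := borel_g_root hx0pos hex0
  have hgge : 0 ≤ ∑' n, borelA x0 n := tsum_nonneg (borelA_nonneg (le_of_lt hx0pos))
  have hmono : Set.InjOn (fun u => u * Real.exp (-u)) (Set.Icc (0:ℝ) 1) := by
    have hsm : StrictMonoOn (fun u => u * Real.exp (-u)) (Set.Icc (0:ℝ) 1) := by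
      apply strictMonoOn_of_deriv_pos (convex_Icc 0 1)
      · exact (continuous_id.mul (Real.continuous_exp.comp continuous_neg)).continuousOn
      · intro u hu
        rw [interior_Icc] at hu
        have hd : HasDerivAt (fun u : ℝ => u * Real.exp (-u))
            (1 * Real.exp (-u) + u * (Real.exp (-u) * (-1))) u :=
          (hasDerivAt_id u).mul ((hasDerivAt_id u).neg.exp)
        rw [hd.deriv]
        have := Real.exp_pos (-u)
        nlinarith [hu.1, hu.2]
    exact hsm.injOn
  have hgβ : (∑' n, borelA x0 n) = β := by
    apply hmono (Set.mem_Icc.mpr ⟨hgge, le_of_lt hglt⟩)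
      (Set.mem_Icc.mpr ⟨le_of_lt hβ0, le_of_lt hβ1⟩)
    show (∑' n, borelA x0 n) * Real.exp (-(∑' n, borelA x0 n)) = β * Real.exp (-β)
    rw [hroot2, hβx]
  have hsumA : Summable (fun n => borelA x0 n) :=
    Summable.of_norm (by simpa [Real.norm_eq_abs] using borelA_summable (le_of_lt hx0pos) hex0)
  have hshift : (∑' n, borelA x0 n) = ∑' n : ℕ, borelA x0 (n+1) := by
    rw [Summable.tsum_eq_zero_add hsumA]
    show borelA x0 0 + _ = _
    rw [show borelA x0 0 = 0 from rfl, zero_add]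
  have hterm : ∀ n : ℕ, Real.exp (-(α * (n + 1))) * (α * (n + 1)) ^ n / (Nat.factorial (n + 1) : ℝ)
      = (1/α) * borelA x0 (n+1) := by
    intro n
    show _ = (1/α) * (((n+1:ℕ):ℝ)^n * x0^(n+1) / ((Nat.factorial (n+1) : ℕ):ℝ))
    rw [mul_pow α ((n:ℝ)+1) n, hx0def, mul_pow α (Real.exp (-α)) (n+1), ← Real.exp_nat_mul]
    rw [show ((n+1:ℕ):ℝ) * (-α) = -(α * ((n:ℝ)+1)) by push_cast; ring]
    have hfne : ((Nat.factorial (n+1) : ℕ):ℝ) ≠ 0 := by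
      exact_mod_cast (Nat.factorial_pos (n+1)).ne'
    have hαne : α ≠ 0 := ne_of_gt hα
    field_simp
    push_cast; ring
  rw [tsum_congr hterm, tsum_mul_left, ← hshift, hgβ, hβdef]
  field_simp
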